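/- arXiv:1511.08911 — 3 statements merged into one kernel-verified Lean document; each statement's English description precedes it below -/
import Mathlib

section
/- Let G be a bull-free graph, and let F be a P_3-connected induced subgraph of G. Suppose there are adjacent vertices x, y in G not in F such that x has no neighbor in F and y has two adjacent neighbors in F. Then y is adjacent to every vertex of F. -/
/-- The bull: vertices `a,b,c,d,e = 0,1,2,3,4` with edges `ab, bc, cd, be, ce`. -/
def bull : SimpleGraph (Fin 5) :=
  SimpleGraph.fromRel (fun a b => (a, b) ∈
    ([(0,1),(1,2),(2,3),(1,4),(2,4)] : List (Fin 5 × Fin 5)))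

/-- `G` contains no induced subgraph isomorphic to `F`. -/
def InducedFree {α β : Type*} (F : SimpleGraph α) (G : SimpleGraph β) : Prop :=
  ¬ ∃ f : α ↪ β, ∀ a b : α, G.Adj (f a) (f b) ↔ F.Adj a b

/-- Two edges `e, f` of `G` share a vertex and their union induces a `P₃` in `G`. -/
def P3Step {V : Type*} (G : SimpleGraph V) (e f : Sym2 V) : Prop :=
  ∃ u a b : V, e = s(u, a) ∧ f = s(u, b) ∧ G.Adj u a ∧ G.Adj u b ∧ a ≠ b ∧ ¬ G.Adj a b

/-- `G` is `P₃`-connected: it is connected, and any two edges are linked by a sequence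
of edges in which consecutive edges share a vertex and their union induces a `P₃`. -/
def P3Connected {V : Type*} (G : SimpleGraph V) : Prop :=
  G.Connected ∧ ∀ e ∈ G.edgeSet, ∀ f ∈ G.edgeSet, Relation.ReflTransGen (P3Step G) e f

lemma bull_embed {V : Type*} (G : SimpleGraph V) {x y u b a : V}
    (hxy : G.Adj x y) (hyu : G.Adj y u) (hub : G.Adj u b) (hya : G.Adj y a)
    (hua : G.Adj u a)
    (nxu : ¬ G.Adj x u) (nxb : ¬ G.Adj x b) (nxa : ¬ G.Adj x a)
    (nyb : ¬ G.Adj y b) (nba : ¬ G.Adj b a)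
    (hxu : x ≠ u) (hxb : x ≠ b) (hxa : x ≠ a) (hyb : y ≠ b) (hba : b ≠ a) :
    ∃ f : Fin 5 ↪ V, ∀ i j : Fin 5, G.Adj (f i) (f j) ↔ bull.Adj i j := by
  have hxy' := hxy.ne
  have hyu' := hyu.ne
  have hub' := hub.ne
  have hya' := hya.ne
  have hua' := hua.ne
  have hyx := hxy.symm; have huy := hyu.symm; have hbu := hub.symm
  have hay := hya.symm; have hau := hua.symm
  have nux : ¬ G.Adj u x := fun h => nxu h.symm
  have nbx : ¬ G.Adj b x := fun h => nxb h.symm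
  have nax : ¬ G.Adj a x := fun h => nxa h.symm
  have nby : ¬ G.Adj b y := fun h => nyb h.symm
  have nab : ¬ G.Adj a b := fun h => nba h.symm
  have nxx := G.irrefl (v := x); have nyy := G.irrefl (v := y)
  have nuu := G.irrefl (v := u); have nbb := G.irrefl (v := b)
  have naa := G.irrefl (v := a)
  refine ⟨⟨![x, y, u, b, a], ?_⟩, ?_⟩
  · intro i j h
    fin_cases i <;> fin_cases j <;> simp_all <;> simp_all [eq_comm]
  · intro i j
    fin_cases i <;> fin_cases j <;>
      simp only [Matrix.cons_val_zero, Matrix.cons_val_one, Matrix.head_cons,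
        Matrix.cons_val_two, Matrix.tail_cons, Matrix.cons_val_three,
        Matrix.cons_val_four] <;>
      first
        | exact iff_of_true (by assumption)
            (by simp [bull, SimpleGraph.fromRel_adj] <;> decide)
        | exact iff_of_false (by assumption)
            (by simp [bull, SimpleGraph.fromRel_adj])

/-- In a bull-free graph `G`, if `F` induces a `P₃`-connected subgraph, `x, y ∉ F` are
adjacent, `x` has no neighbor in `F`, and `y` has two adjacent neighbors in `F`,
then `y` is complete to `F`. -/
theorem complete_of_P3Connected {V : Type*} (G : SimpleGraph V)
    (hbull : InducedFree bull G) (F : Set V) (hF : P3Connected (G.induce F))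
    (x y : V) (hx : x ∉ F) (hy : y ∉ F) (hxy : G.Adj x y)
    (hxF : ∀ v ∈ F, ¬ G.Adj x v)
    (hyF : ∃ a ∈ F, ∃ b ∈ F, G.Adj a b ∧ G.Adj y a ∧ G.Adj y b) :
    ∀ v ∈ F, G.Adj y v := by
  obtain ⟨a, ha, b, hb, hab, hya, hyb⟩ := hyF
  set GF := G.induce F with hGF
  -- key invariant
  have key : ∀ e f : Sym2 F, Relation.ReflTransGen (P3Step GF) e f →
      (∀ z ∈ e, G.Adj y z) → (∀ z ∈ f, G.Adj y z) := by
    intro e f h he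
    induction h with
    | refl => exact he
    | tail _ hstep ih =>
      obtain ⟨u', a', b', rfl, rfl, hua', hub', hne, hnab⟩ := hstep
      have hyu : G.Adj y u' := ih u' (Sym2.mem_mk_left _ _)
      have hya' : G.Adj y a' := ih a' (Sym2.mem_mk_right _ _)
      have hub2 : G.Adj (↑u') (↑b') := by simpa [hGF] using hub'
      have hua2 : G.Adj (↑u') (↑a') := by simpa [hGF] using hua'
      have hnab2 : ¬ G.Adj (↑b') (↑a') := fun h => hnab (by simpa [hGF] using h.symm)
      have hyb' : G.Adj y b' := by
        by_contra hnyb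
        exact hbull (bull_embed G hxy hyu hub2 hya' hua2
          (hxF _ u'.2) (hxF _ b'.2) (hxF _ a'.2) hnyb hnab2
          (fun h => hx (h ▸ u'.2)) (fun h => hx (h ▸ b'.2)) (fun h => hx (h ▸ a'.2))
          (fun h => hy (h ▸ b'.2)) (Subtype.coe_ne_coe.mpr (Ne.symm hne)))
      intro z hz
      rcases Sym2.mem_iff.mp hz with rfl | rfl
      · exact hyu
      · exact hyb'
  intro v hv
  by_cases hva : v = a
  · exact hva ▸ hya
  -- v has a neighbor in F
  have hreach : GF.Reachable ⟨v, hv⟩ ⟨a, ha⟩ := hF.1.preconnected _ _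
  obtain ⟨w, hvw⟩ : ∃ w : F, GF.Adj ⟨v, hv⟩ w := by
    obtain ⟨p⟩ := hreach
    cases p with
    | nil => exact absurd rfl hva
    | cons h _ => exact ⟨_, h⟩
  have hab' : GF.Adj ⟨a, ha⟩ ⟨b, hb⟩ := by simpa [hGF] using hab
  have hchain := hF.2 s((⟨a, ha⟩ : F), (⟨b, hb⟩ : F)) (GF.mem_edgeSet.mpr hab')
    s((⟨v, hv⟩ : F), w) (GF.mem_edgeSet.mpr hvw)
  have hbase : ∀ z ∈ s((⟨a, ha⟩ : F), (⟨b, hb⟩ : F)), G.Adj y z := by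
    intro z hz
    rcases Sym2.mem_iff.mp hz with rfl | rfl
    · exact hya
    · exact hyb
  exact key _ _ hchain hbase ⟨v, hv⟩ (Sym2.mem_mk_left _ _)
end

section
/- The graph F_0 (seven vertices v_1,...,v_7 with edges forming a 5-cycle v_1v_2v_3v_4v_5, vertex v_6 adjacent to all of v_1,...,v_5, and vertex v_7 adjacent to v_1,v_2,v_3,v_4) is P_3-connected. -/
/-- The graph `F₀`: a 5-cycle `v₁…v₅ = 0,…,4`, a vertex `v₆ = 5` complete to the
cycle, and a vertex `v₇ = 6` adjacent to `v₁, v₂, v₃, v₄`. -/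
def F0 : SimpleGraph (Fin 7) :=
  SimpleGraph.fromRel (fun a b => (a, b) ∈
    ([(0,1),(1,2),(2,3),(3,4),(4,0),
      (5,0),(5,1),(5,2),(5,3),(5,4),
      (6,0),(6,1),(6,2),(6,3)] : List (Fin 7 × Fin 7)))

instance : DecidableRel F0.Adj := fun a b =>
  decidable_of_iff _ (SimpleGraph.fromRel_adj _ a b).symm

/-- A single `P₃`-step, packaged for `ReflTransGen`. -/
lemma F0.st {e f : Sym2 (Fin 7)} (u a b : Fin 7) (he : e = s(u, a)) (hf : f = s(u, b))
    (h1 : F0.Adj u a) (h2 : F0.Adj u b) (h3 : a ≠ b) (h4 : ¬ F0.Adj a b) :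
    Relation.ReflTransGen (P3Step F0) e f :=
  Relation.ReflTransGen.single ⟨u, a, b, he, hf, h1, h2, h3, h4⟩

/-- `P3Step` is a symmetric relation. -/
lemma P3Step.symm' {V : Type*} (G : SimpleGraph V) : Symmetric (P3Step G) := by
  rintro e f ⟨u, a, b, he, hf, h1, h2, h3, h4⟩
  exact ⟨u, b, a, hf, he, h2, h1, h3.symm, fun h => h4 h.symm⟩

/-- Every edge of `F₀` can be linked to the "hub" edge `s(5,0)` by `P₃`-steps. -/
lemma F0.reach_hub : ∀ e ∈ F0.edgeSet, Relation.ReflTransGen (P3Step F0) e s(5, 0) := by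
  -- chains to the hub, stated for an arbitrary representation of each edge
  have c50 : ∀ e : Sym2 (Fin 7), e = s(5, 0) → Relation.ReflTransGen (P3Step F0) e s(5, 0) := by
    rintro e rfl; exact .refl
  have c52 : ∀ e : Sym2 (Fin 7), e = s(5, 2) → Relation.ReflTransGen (P3Step F0) e s(5, 0) :=
    fun e he => F0.st 5 2 0 he (by decide) (by decide) (by decide) (by decide) (by decide)
  have c53 : ∀ e : Sym2 (Fin 7), e = s(5, 3) → Relation.ReflTransGen (P3Step F0) e s(5, 0) :=
    fun e he => F0.st 5 3 0 he (by decide) (by decide) (by decide) (by decide) (by decide)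
  have c51 : ∀ e : Sym2 (Fin 7), e = s(5, 1) → Relation.ReflTransGen (P3Step F0) e s(5, 0) :=
    fun e he => .trans
      (F0.st 5 1 3 he (by decide) (by decide) (by decide) (by decide) (by decide))
      (c53 _ rfl)
  have c54 : ∀ e : Sym2 (Fin 7), e = s(5, 4) → Relation.ReflTransGen (P3Step F0) e s(5, 0) :=
    fun e he => .trans
      (F0.st 5 4 2 he (by decide) (by decide) (by decide) (by decide) (by decide))
      (c52 _ rfl)
  have c60 : ∀ e : Sym2 (Fin 7), e = s(6, 0) → Relation.ReflTransGen (P3Step F0) e s(5, 0) :=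
    fun e he => F0.st 0 6 5 (by rw [he]; decide) (by decide)
      (by decide) (by decide) (by decide) (by decide)
  have c63 : ∀ e : Sym2 (Fin 7), e = s(6, 3) → Relation.ReflTransGen (P3Step F0) e s(5, 0) :=
    fun e he => .trans
      (F0.st 3 6 5 (by rw [he]; decide) (show (s(3,5) : Sym2 (Fin 7)) = s(3,5) from rfl)
        (by decide) (by decide) (by decide) (by decide))
      (c53 _ (by decide))
  have c61 : ∀ e : Sym2 (Fin 7), e = s(6, 1) → Relation.ReflTransGen (P3Step F0) e s(5, 0) :=
    fun e he => .trans
      (F0.st 6 1 3 he (by decide) (by decide) (by decide) (by decide) (by decide))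
      (c63 _ rfl)
  have c62 : ∀ e : Sym2 (Fin 7), e = s(6, 2) → Relation.ReflTransGen (P3Step F0) e s(5, 0) :=
    fun e he => .trans
      (F0.st 6 2 0 he (by decide) (by decide) (by decide) (by decide) (by decide))
      (c60 _ rfl)
  have c04 : ∀ e : Sym2 (Fin 7), e = s(0, 4) → Relation.ReflTransGen (P3Step F0) e s(5, 0) :=
    fun e he => .trans
      (F0.st 0 4 6 he (show (s(0,6) : Sym2 (Fin 7)) = s(0,6) from rfl)
        (by decide) (by decide) (by decide) (by decide))
      (c60 _ (by decide))
  have c01 : ∀ e : Sym2 (Fin 7), e = s(0, 1) → Relation.ReflTransGen (P3Step F0) e s(5, 0) :=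
    fun e he => .trans
      (F0.st 0 1 4 he (by decide) (by decide) (by decide) (by decide) (by decide))
      (c04 _ rfl)
  have c12 : ∀ e : Sym2 (Fin 7), e = s(1, 2) → Relation.ReflTransGen (P3Step F0) e s(5, 0) :=
    fun e he => .trans
      (F0.st 1 2 0 he (show (s(1,0) : Sym2 (Fin 7)) = s(1,0) from rfl)
        (by decide) (by decide) (by decide) (by decide))
      (c01 _ (by decide))
  have c34 : ∀ e : Sym2 (Fin 7), e = s(3, 4) → Relation.ReflTransGen (P3Step F0) e s(5, 0) :=
    fun e he => .trans
      (F0.st 3 4 6 he (show (s(3,6) : Sym2 (Fin 7)) = s(3,6) from rfl)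
        (by decide) (by decide) (by decide) (by decide))
      (c63 _ (by decide))
  have c23 : ∀ e : Sym2 (Fin 7), e = s(2, 3) → Relation.ReflTransGen (P3Step F0) e s(5, 0) :=
    fun e he => .trans
      (F0.st 3 2 4 (by rw [he]; decide) (show (s(3,4) : Sym2 (Fin 7)) = s(3,4) from rfl)
        (by decide) (by decide) (by decide) (by decide))
      (c34 _ rfl)
  intro e
  refine Sym2.ind (fun x y h => ?_) e
  rw [SimpleGraph.mem_edgeSet] at h
  revert h
  fin_cases x <;> fin_cases y <;> intro h <;>
    first
      | exact absurd h (by decide)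
      | exact c50 _ (by decide)
      | exact c51 _ (by decide)
      | exact c52 _ (by decide)
      | exact c53 _ (by decide)
      | exact c54 _ (by decide)
      | exact c60 _ (by decide)
      | exact c61 _ (by decide)
      | exact c62 _ (by decide)
      | exact c63 _ (by decide)
      | exact c01 _ (by decide)
      | exact c12 _ (by decide)
      | exact c23 _ (by decide)
      | exact c34 _ (by decide)
      | exact c04 _ (by decide)

/-- The graph `F₀` is `P₃`-connected. -/
theorem F0_P3Connected : P3Connected F0 := by
  constructor
  · rw [SimpleGraph.connected_iff]
    refine ⟨fun a b => ?_, ⟨0⟩⟩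
    have r0 : ∀ v : Fin 7, F0.Reachable v 0 := by
      intro v
      fin_cases v
      · rfl
      · exact (show F0.Adj 1 0 by decide).reachable
      · exact ((show F0.Adj 2 1 by decide).reachable).trans
          ((show F0.Adj 1 0 by decide).reachable)
      · exact ((show F0.Adj 3 4 by decide).reachable).trans
          ((show F0.Adj 4 0 by decide).reachable)
      · exact (show F0.Adj 4 0 by decide).reachable
      · exact (show F0.Adj 5 0 by decide).reachable
      · exact (show F0.Adj 6 0 by decide).reachable
    exact (r0 a).trans (r0 b).symm
  · intro e he f hf
    exact (F0.reach_hub e he).trans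
      ((@Relation.ReflTransGen.stdSymm _ _ ⟨fun _ _ h => P3Step.symm' F0 h⟩).symm _ _ (F0.reach_hub f hf))
end

section
/- Every prime graph on at least 3 vertices is P_3-connected. -/
/-- A homogeneous set: every vertex outside `S` is complete or anticomplete to `S`. -/
def IsHomog {V : Type*} (G : SimpleGraph V) (S : Set V) : Prop :=
  ∀ v ∉ S, (∀ s ∈ S, G.Adj v s) ∨ (∀ s ∈ S, ¬ G.Adj v s)

/-- A graph is prime if it has no proper homogeneous set. -/
def IsPrime {V : Type*} (G : SimpleGraph V) : Prop :=
  ¬ ∃ S : Set V, IsHomog G S ∧ 2 ≤ S.ncard ∧ S ≠ Set.univ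

namespace P3Proof

open Relation SimpleGraph

variable {V : Type*} {G : SimpleGraph V}

lemma p3step_symm : Symmetric (P3Step G) := by
  rintro e f ⟨u, a, b, he, hf, hua, hub, hab, hnab⟩
  exact ⟨u, b, a, hf, he, hub, hua, hab.symm, fun h => hnab h.symm⟩

lemma rtg_symm {e f : Sym2 V} (h : Relation.ReflTransGen (P3Step G) e f) :
    Relation.ReflTransGen (P3Step G) f e :=
  (@Relation.ReflTransGen.stdSymm _ _ ⟨fun a b hab => p3step_symm hab⟩).symm _ _ h

/-- `a` and `b` are joined by an edge in the `P₃`-class of `e`. -/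
def VAdj (G : SimpleGraph V) (e : Sym2 V) (a b : V) : Prop :=
  G.Adj a b ∧ Relation.ReflTransGen (P3Step G) e s(a, b)

lemma VAdj.symm {e : Sym2 V} {a b : V} (h : VAdj G e a b) : VAdj G e b a :=
  ⟨h.1.symm, by rw [Sym2.eq_swap]; exact h.2⟩

/-- Walks of length `k` along edges in the class of `e`. -/
def Chain (G : SimpleGraph V) (e : Sym2 V) : ℕ → V → V → Prop
  | 0, a, b => a = b
  | k+1, a, b => ∃ c, VAdj G e a c ∧ Chain G e k c b

lemma chain_zero_iff {e : Sym2 V} {a b : V} : Chain G e 0 a b ↔ a = b := Iff.rfl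

lemma chain_succ_iff {e : Sym2 V} {k : ℕ} {a b : V} :
    Chain G e (k+1) a b ↔ ∃ c, VAdj G e a c ∧ Chain G e k c b := Iff.rfl

lemma chain_snoc {e : Sym2 V} : ∀ {k : ℕ} {a b c : V},
    Chain G e k a b → VAdj G e b c → Chain G e (k+1) a c := by
  intro k
  induction k with
  | zero =>
    intro a b c h h2
    obtain rfl : a = b := h
    exact ⟨c, h2, rfl⟩
  | succ k ih =>
    intro a b c h h2
    obtain ⟨d, h1, hd⟩ := chain_succ_iff.mp h
    exact ⟨d, h1, ih hd h2⟩

lemma chain_rev {e : Sym2 V} : ∀ {k : ℕ} {a b : V}, Chain G e k a b → Chain G e k b a := by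
  intro k
  induction k with
  | zero => intro a b h; exact (chain_zero_iff.mp h).symm
  | succ k ih =>
    intro a b h
    obtain ⟨c, h1, h2⟩ := chain_succ_iff.mp h
    exact chain_snoc (ih h2) h1.symm

lemma chain_concat {e : Sym2 V} : ∀ {k l : ℕ} {a b c : V},
    Chain G e k a b → Chain G e l b c → Chain G e (k + l) a c := by
  intro k
  induction k with
  | zero =>
    intro l a b c h h2
    obtain rfl : a = b := h
    simpa using h2
  | succ k ih =>
    intro l a b c h h2
    obtain ⟨d, h1, hd⟩ := chain_succ_iff.mp h
    rw [Nat.succ_add]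
    exact ⟨d, h1, ih hd h2⟩

lemma chain_reachable {e : Sym2 V} : ∀ {k : ℕ} {a b : V},
    Chain G e k a b → G.Reachable a b := by
  intro k
  induction k with
  | zero => intro a b h; exact (chain_zero_iff.mp h) ▸ Reachable.refl a
  | succ k ih =>
    intro a b h
    obtain ⟨c, h1, h2⟩ := chain_succ_iff.mp h
    exact (h1.1.reachable).trans (ih h2)

lemma endpoint_chain {a₀ b₀ : V} (hab : G.Adj a₀ b₀) :
    ∀ f, Relation.ReflTransGen (P3Step G) s(a₀, b₀) f →
      ∀ c ∈ f, ∃ k, Chain G s(a₀, b₀) k a₀ c := by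
  intro f hf
  induction hf with
  | refl =>
    intro c hc
    rw [Sym2.mem_iff] at hc
    rcases hc with rfl | hc
    · exact ⟨0, rfl⟩
    · exact ⟨1, b₀, ⟨hab, Relation.ReflTransGen.refl⟩, hc.symm⟩
  | @tail g f' hRg hstep ih =>
    obtain ⟨w, a, b, hgeq, hg'eq, hwa, hwb, hab', hnab⟩ := hstep
    intro c hc
    rw [hg'eq, Sym2.mem_iff] at hc
    have hwmem : w ∈ g := by rw [hgeq]; exact Sym2.mem_mk_left w a
    rcases hc with rfl | rfl
    · exact ih c hwmem
    · obtain ⟨k, hk⟩ := ih w hwmem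
      refine ⟨k + 1, chain_snoc hk ⟨hwb, ?_⟩⟩
      have : Relation.ReflTransGen (P3Step G) s(a₀, b₀) f' :=
        hRg.tail ⟨w, a, c, hgeq, hg'eq, hwa, hwb, hab', hnab⟩
      rwa [hg'eq] at this

lemma chain_mem {a₀ b₀ s : V} (hab : G.Adj a₀ b₀)
    (hs : ∃ w, VAdj G s(a₀, b₀) s w) : ∃ k, Chain G s(a₀, b₀) k a₀ s := by
  obtain ⟨w, hw⟩ := hs
  exact endpoint_chain hab s(s, w) hw.2 s (Sym2.mem_mk_left s w)

lemma chain_adj {e : Sym2 V} {z : V} (hz : ¬ ∃ w, VAdj G e z w) :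
    ∀ {k : ℕ} {s t : V}, Chain G e k s t → G.Adj z s → G.Adj z t := by
  intro k
  induction k with
  | zero =>
    intro s t h hzs
    exact (chain_zero_iff.mp h) ▸ hzs
  | succ k ih =>
    intro s t h hzs
    obtain ⟨c, hsc, hct⟩ := chain_succ_iff.mp h
    have hcz_ne : z ≠ c := by
      rintro rfl
      exact hz ⟨s, hsc.symm⟩
    have hzc : G.Adj z c := by
      by_contra hn
      apply hz
      refine ⟨s, hzs, ?_⟩
      have hstep : P3Step G s(s, c) s(s, z) :=
        ⟨s, c, z, rfl, rfl, hsc.1, hzs.symm, fun h' => hcz_ne h'.symm, fun h' => hn h'.symm⟩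
      have h2 : Relation.ReflTransGen (P3Step G) e s(s, z) := hsc.2.tail hstep
      rwa [Sym2.eq_swap] at h2
    exact ih hct hzc

lemma support_full [Fintype V] (hprime : IsPrime G) {e : Sym2 V} (he : e ∈ G.edgeSet) :
    ∀ v : V, ∃ w, VAdj G e v w := by
  revert he
  induction e using Sym2.ind with
  | _ a₀ b₀ =>
    intro he
    have hab : G.Adj a₀ b₀ := G.mem_edgeSet.mp he
    set S : Set V := {x | ∃ w, VAdj G s(a₀, b₀) x w} with hSdef
    have hchainS : ∀ x ∈ S, ∃ k, Chain G s(a₀, b₀) k a₀ x := fun x hx => chain_mem hab hx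
    have hhom : IsHomog G S := by
      intro z hz
      by_cases hzs : ∃ s ∈ S, G.Adj z s
      · left
        obtain ⟨s₁, hs₁, hzs₁⟩ := hzs
        intro t ht
        obtain ⟨k1, h1⟩ := hchainS s₁ hs₁
        obtain ⟨k2, h2⟩ := hchainS t ht
        exact chain_adj hz (chain_concat (chain_rev h1) h2) hzs₁
      · right
        intro s hs hzs'
        exact hzs ⟨s, hs, hzs'⟩
    have haS : a₀ ∈ S := ⟨b₀, hab, Relation.ReflTransGen.refl⟩
    have hbS : b₀ ∈ S := ⟨a₀, VAdj.symm ⟨hab, Relation.ReflTransGen.refl⟩⟩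
    have hcard2 : 2 ≤ S.ncard := by
      have hsub : ({a₀, b₀} : Set V) ⊆ S := by
        intro x hx
        rcases hx with rfl | hx
        · exact haS
        · exact (Set.mem_singleton_iff.mp hx) ▸ hbS
      calc 2 = ({a₀, b₀} : Set V).ncard := (Set.ncard_pair hab.ne).symm
        _ ≤ S.ncard := Set.ncard_le_ncard hsub S.toFinite
    have hSuniv : S = Set.univ := by
      by_contra hne
      exact hprime ⟨S, hhom, hcard2, hne⟩
    intro v
    have : v ∈ S := hSuniv ▸ Set.mem_univ v
    exact this

lemma chain_of_full [Fintype V] (hprime : IsPrime G) {e : Sym2 V} (he : e ∈ G.edgeSet)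
    (u v : V) : ∃ k, Chain G e k u v := by
  have hfull := support_full hprime he
  revert he hfull
  induction e using Sym2.ind with
  | _ a₀ b₀ =>
    intro he hfull
    have hab : G.Adj a₀ b₀ := G.mem_edgeSet.mp he
    obtain ⟨k1, h1⟩ := chain_mem hab (hfull u)
    obtain ⟨k2, h2⟩ := chain_mem hab (hfull v)
    exact ⟨k1 + k2, chain_concat (chain_rev h1) h2⟩

lemma propagate {e : Sym2 V} {x u v : V}
    (hnr : ¬ Relation.ReflTransGen (P3Step G) e s(u, v))
    (hxu : VAdj G e x u) (hxv : VAdj G e x v) :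
    ∀ g, Relation.ReflTransGen (P3Step G) s(u, v) g →
      ∀ c ∈ g, G.Adj x c ∧ Relation.ReflTransGen (P3Step G) e s(x, c) := by
  intro g hg
  induction hg with
  | refl =>
    intro c hc
    rw [Sym2.mem_iff] at hc
    rcases hc with rfl | rfl
    · exact ⟨hxu.1, hxu.2⟩
    · exact ⟨hxv.1, hxv.2⟩
  | @tail g f' hRg hstep ih =>
    obtain ⟨w, a, b, hgeq, hg'eq, hwa, hwb, hab, hnab⟩ := hstep
    intro c hc
    rw [hg'eq, Sym2.mem_iff] at hc
    have hxw := ih w (by rw [hgeq]; exact Sym2.mem_mk_left w a)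
    have hxa := ih a (by rw [hgeq]; exact Sym2.mem_mk_right w a)
    rcases hc with rfl | rfl
    · exact hxw
    · have hxb_ne : x ≠ c := by
        rintro rfl
        exact hnab (hxa.1.symm)
      have hxb : G.Adj x c := by
        by_contra hnxb
        have hstep2 : P3Step G s(w, x) s(w, c) :=
          ⟨w, x, c, rfl, rfl, hxw.1.symm, hwb, hxb_ne, hnxb⟩
        have hwx : Relation.ReflTransGen (P3Step G) e s(w, x) := by
          rw [Sym2.eq_swap]; exact hxw.2
        have h1 : Relation.ReflTransGen (P3Step G) e s(w, c) := hwx.tail hstep2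
        have h2 : Relation.ReflTransGen (P3Step G) s(u, v) s(w, c) := by
          have := hRg.tail ⟨w, a, c, hgeq, hg'eq, hwa, hwb, hab, hnab⟩
          rwa [hg'eq] at this
        exact hnr (h1.trans (rtg_symm h2))
      have hRxb : Relation.ReflTransGen (P3Step G) e s(x, c) :=
        hxa.2.tail ⟨x, a, c, rfl, rfl, hxa.1, hxb, hab, hnab⟩
      exact ⟨hxb, hRxb⟩

lemma no_triangle [Fintype V] (hprime : IsPrime G) {e : Sym2 V} {u v : V}
    (huv : G.Adj u v) (hnr : ¬ Relation.ReflTransGen (P3Step G) e s(u, v))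
    (hch : Chain G e 2 u v) : False := by
  obtain ⟨x, hux, hch1⟩ := chain_succ_iff.mp hch
  obtain ⟨c, hxc, hc⟩ := chain_succ_iff.mp hch1
  obtain rfl : c = v := hc
  have hfull := support_full hprime (G.mem_edgeSet.mpr huv)
  obtain ⟨w, hw⟩ := hfull x
  have := propagate hnr hux.symm hxc s(x, w) hw.2 x (Sym2.mem_mk_left x w)
  exact this.1.ne rfl

end P3Proof

/-- Every finite prime graph on at least 3 vertices (with at least one edge) is
`P₃`-connected. -/
theorem prime_is_P3Connected {V : Type*} [Fintype V] (G : SimpleGraph V)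
    (hprime : IsPrime G) (hcard : 3 ≤ Fintype.card V)
    (hedge : G.edgeSet.Nonempty) :
    P3Connected G := by
  classical
  open P3Proof in
  obtain ⟨e₀, he₀⟩ := hedge
  constructor
  · -- connectivity
    rw [SimpleGraph.connected_iff]
    refine ⟨?_, Fintype.card_pos_iff.mp (by omega)⟩
    intro u v
    obtain ⟨k, hk⟩ := chain_of_full hprime he₀ u v
    exact chain_reachable hk
  · intro e he f hf
    by_contra hef
    revert hf hef
    induction f using Sym2.ind with
    | _ u₀ v₀ =>
      intro hf hef
      have huv₀ : G.Adj u₀ v₀ := G.mem_edgeSet.mp hf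
      obtain ⟨k, hk⟩ := chain_of_full hprime he u₀ v₀
      have hPne : ∃ k : ℕ, ∃ (e' : Sym2 V) (u v : V), e' ∈ G.edgeSet ∧ G.Adj u v ∧
          ¬ Relation.ReflTransGen (P3Step G) e' s(u, v) ∧ Chain G e' k u v :=
        ⟨k, e, u₀, v₀, he, huv₀, hef, hk⟩
      have hspec := Nat.find_spec hPne
      have h0 : Nat.find hPne ≠ 0 := by
        intro h
        rw [h] at hspec
        obtain ⟨e', u, v, -, huv, -, hch⟩ := hspec
        exact huv.ne (chain_zero_iff.mp hch)
      have h1 : Nat.find hPne ≠ 1 := by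
        intro h
        rw [h] at hspec
        obtain ⟨e', u, v, -, -, hnr, hch⟩ := hspec
        obtain ⟨c, hvadj, hc⟩ := chain_succ_iff.mp hch
        obtain rfl : c = v := chain_zero_iff.mp hc
        exact hnr hvadj.2
      have h2 : Nat.find hPne ≠ 2 := by
        intro h
        rw [h] at hspec
        obtain ⟨e', u, v, -, huv, hnr, hch⟩ := hspec
        exact no_triangle hprime huv hnr hch
      have h3 : 3 ≤ Nat.find hPne := by omega
      obtain ⟨e', u, v, he', huv, hnr, hch⟩ := hspec
      obtain ⟨p1, hup1, hch'⟩ : ∃ c, VAdj G e' u c ∧ Chain G e' (Nat.find hPne - 1) c v := by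
        obtain ⟨m, hm⟩ : ∃ m, Nat.find hPne = m + 1 := ⟨Nat.find hPne - 1, by omega⟩
        rw [hm] at hch
        obtain ⟨c, h1', h2'⟩ := chain_succ_iff.mp hch
        exact ⟨c, h1', by rw [hm]; simpa using h2'⟩
      have hp1v_ne : p1 ≠ v := by
        rintro rfl
        exact hnr hup1.2
      have hp1v : G.Adj p1 v := by
        by_contra hn
        exact hnr (hup1.2.tail ⟨u, p1, v, rfl, rfl, hup1.1, huv, hp1v_ne, hn⟩)
      by_cases hR : Relation.ReflTransGen (P3Step G) e' s(p1, v)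
      · have hP2 : ∃ (e'' : Sym2 V) (u' v' : V), e'' ∈ G.edgeSet ∧ G.Adj u' v' ∧
            ¬ Relation.ReflTransGen (P3Step G) e'' s(u', v') ∧ Chain G e'' 2 u' v' :=
          ⟨e', u, v, he', huv, hnr, p1, hup1, v, ⟨hp1v, hR⟩, rfl⟩
        exact Nat.find_min hPne (by omega : 2 < Nat.find hPne) hP2
      · have hPm : ∃ (e'' : Sym2 V) (u' v' : V), e'' ∈ G.edgeSet ∧ G.Adj u' v' ∧
            ¬ Relation.ReflTransGen (P3Step G) e'' s(u', v') ∧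
            Chain G e'' (Nat.find hPne - 1) u' v' :=
          ⟨e', p1, v, he', hp1v, hR, hch'⟩
        exact Nat.find_min hPne (by omega : Nat.find hPne - 1 < Nat.find hPne) hPm
end
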